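/- Let U = ∑_{ν∈G} u(ν)·ν^{−1} with u(ν) ∈ ℤ_{(p)} satisfy ∑_{ν∈G} u(ν)·α_p(η)^{ν^{−1}} ≡ 0 (mod p·Z_{K,(p)}), let 𝔭 | p be the prime of L associated with the irreducible p-adic character θ, and suppose U_φ := e_φ·U ≢ 0 (mod 𝔭) for some (equivalently, every) φ | θ. Then Δ_p^θ(η) ≡ 0 (mod 𝔭^f), i.e. the image of the local θ-regulator Δ_p^θ(η) in L_𝔭 = ℚ_p is divisible by p^f. -/

import Mathlib

open NumberField

noncomputable section

/-- `x` is a `p`-integer of `K`, i.e. `x` lies in the localization `Z_{K,(p)}` of the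
ring of integers of `K` away from `p` (denominators prime to `p`). -/
def IsPInt (K : Type*) [Field K] [NumberField K] (p : ℕ) (x : K) : Prop :=
  ∃ (a : 𝓞 K) (d : ℤ), ¬ (p : ℤ) ∣ d ∧ (d : K) * x = (a : K)

/-- `x ∈ I · Z_{K,(p)}`, for an ideal `I` of the ring of integers of `K`. -/
def MemPIdeal (K : Type*) [Field K] [NumberField K] (p : ℕ) (I : Ideal (𝓞 K)) (x : K) : Prop :=
  ∃ (a : 𝓞 K) (d : ℤ), ¬ (p : ℤ) ∣ d ∧ a ∈ I ∧ (d : K) * x = (a : K)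

/-- `x ∈ K^×` is prime to `p` : it is a unit at every place of `K` above `p`. -/
def PrimeToP (K : Type*) [Field K] [NumberField K] (p : ℕ) (x : K) : Prop :=
  IsPInt K p x ∧ IsPInt K p x⁻¹

/-- the prime `p` is unramified in `K`. -/
def UnramifiedIn (K : Type*) [Field K] [NumberField K] (p : ℕ) : Prop :=
  ∀ P : Ideal (𝓞 K), P.IsPrime → (p : 𝓞 K) ∈ P →
    Ideal.ramificationIdx' (Ideal.span {(p : ℤ)}) P = 1

/-- `np` is the common residue degree of the primes of `K` above `p`. -/
def ResidueDeg (K : Type*) [Field K] [NumberField K] (p np : ℕ) : Prop :=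
  ∀ P : Ideal (𝓞 K), P.IsPrime → (p : 𝓞 K) ∈ P →
    Ideal.inertiaDeg' (Ideal.span {(p : ℤ)}) P = np

/-- a rational number is a `p`-integer, i.e. lies in `ℤ_(p)`. -/
def RatIsPInt (p : ℕ) (q : ℚ) : Prop :=
  ∃ a d : ℤ, ¬ (p : ℤ) ∣ d ∧ (d : ℚ) * q = (a : ℚ)

/-- the generalized Fermat quotient `α_p(x) = (x^{p^{n_p}-1} - 1)/p`. -/
def alphaP (K : Type*) [Field K] [NumberField K] (p np : ℕ) (x : K) : K :=
  (x ^ (p ^ np - 1) - 1) / p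

/-- The matrix representation `ρ` of `G = Gal(K/ℚ)` with coefficients in `M` is absolutely
irreducible (Burnside criterion: its image generates the full matrix algebra). -/
def AbsIrred (K M : Type*) [Field K] [NumberField K] [Field M] [NumberField M]
    (m : ℕ) (ρ : (K ≃ₐ[ℚ] K) →* Matrix (Fin m) (Fin m) M) : Prop :=
  Algebra.adjoin M (Set.range fun g : K ≃ₐ[ℚ] K => ρ g) = ⊤

/-- `D` is the decomposition group of the prime `P` of `M`: the set of automorphisms of `M`
stabilizing `P`. -/
def IsDecompGroup (M : Type*) [Field M] [NumberField M]
    (P : Ideal (𝓞 M)) (D : Finset (M ≃ₐ[ℚ] M)) : Prop :=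
  ∀ s : M ≃ₐ[ℚ] M, s ∈ D ↔
    ∀ a : 𝓞 M, a ∈ P → ∀ b : 𝓞 M, (b : M) = s (a : M) → b ∈ P

/-- Coefficient at `ν` of the `φ`-component `U_φ = e_φ·U` of `U = ∑_ν u(ν)·ν⁻¹` with rational
coefficients: `u_φ(ν) = (φ(1)/n)·∑_{τ∈G} φ(τ⁻¹)·u(ντ)`, where `φ = tr ∘ ρ`. -/
def eCompQ (K M : Type*) [Field K] [NumberField K] [Field M] [NumberField M]
    (m : ℕ) (ρ : (K ≃ₐ[ℚ] K) →* Matrix (Fin m) (Fin m) M)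
    (u : (K ≃ₐ[ℚ] K) → ℚ) (ν : K ≃ₐ[ℚ] K) : M :=
  ((m : M) / (Fintype.card (K ≃ₐ[ℚ] K) : M)) *
    ∑ τ : K ≃ₐ[ℚ] K, Matrix.trace (ρ τ⁻¹) * (u (ν * τ) : M)

/-- Coefficient at `ν` of the `φ`-component `W_φ = e_φ·W` of `W = ∑_ν w(ν)·ν⁻¹` with
coefficients in `M`. -/
def eCompM (K M : Type*) [Field K] [NumberField K] [Field M] [NumberField M]
    (m : ℕ) (ρ : (K ≃ₐ[ℚ] K) →* Matrix (Fin m) (Fin m) M)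
    (w : (K ≃ₐ[ℚ] K) → M) (ν : K ≃ₐ[ℚ] K) : M :=
  ((m : M) / (Fintype.card (K ≃ₐ[ℚ] K) : M)) *
    ∑ τ : K ≃ₐ[ℚ] K, Matrix.trace (ρ τ⁻¹) * w (ν * τ)

/-- The local `θ`-regulator `Δ_p^θ(α) = ∏_{φ'∣θ} P^{φ'}(…, α^ν, …)`, where the absolutely
irreducible constituents `φ' = φ^s` of `θ` are indexed by the decomposition group `D` and
`P^{φ^s}(…, α^ν, …) = det(∑_ν α^ν · ρ^s(ν⁻¹))`. -/
def DeltaTheta (K M : Type*) [Field K] [NumberField K] [Field M] [NumberField M]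
    [Algebra K M] (m : ℕ) (ρ : (K ≃ₐ[ℚ] K) →* Matrix (Fin m) (Fin m) M)
    (D : Finset (M ≃ₐ[ℚ] M)) (α : K) : M :=
  ∏ s ∈ D, Matrix.det (∑ ν : K ≃ₐ[ℚ] K, algebraMap K M (ν α) • (ρ ν⁻¹).map s)

section Aux
set_option linter.unusedSectionVars false
set_option linter.unusedVariables false

theorem not_pdvd_one {p : ℕ} (hp : p.Prime) : ¬ (p : ℤ) ∣ 1 := fun h => by
  have h' := Int.isUnit_iff.mp (isUnit_of_dvd_one h)
  have := hp.two_le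
  omega

theorem not_pdvd_mul {p : ℕ} (hp : p.Prime) {d₁ d₂ : ℤ} (h₁ : ¬ (p:ℤ) ∣ d₁)
    (h₂ : ¬ (p:ℤ) ∣ d₂) : ¬ (p:ℤ) ∣ d₁ * d₂ := fun h =>
  ((Nat.prime_iff_prime_int.mp hp).dvd_mul.mp h).elim h₁ h₂

theorem pdvd_ne_zero {p : ℕ} {d : ℤ} (h : ¬ (p:ℤ) ∣ d) : d ≠ 0 := by
  rintro rfl; exact h (dvd_zero _)

variable {F : Type*} [Field F] [NumberField F] {p : ℕ}

theorem coe_int_oz (d : ℤ) : ((d : 𝓞 F) : F) = (d : F) := map_intCast (algebraMap (𝓞 F) F) d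

theorem coe_nat_oz (d : ℕ) : ((d : 𝓞 F) : F) = (d : F) := map_natCast (algebraMap (𝓞 F) F) d

theorem isPInt_coe (hp : p.Prime) (a : 𝓞 F) : IsPInt F p (a : F) :=
  ⟨a, 1, not_pdvd_one hp, by simp⟩

theorem isPInt_zero (hp : p.Prime) : IsPInt F p 0 := by
  have h := isPInt_coe (F := F) hp 0
  rwa [show ((0 : 𝓞 F) : F) = 0 from RingOfIntegers.coe_eq_zero_iff.mpr rfl] at h

theorem isPInt_one (hp : p.Prime) : IsPInt F p 1 := by
  have h := isPInt_coe (F := F) hp 1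
  rwa [show ((1 : 𝓞 F) : F) = 1 from algebraMap.coe_one] at h

theorem IsPInt.add (hp : p.Prime) {x y : F} (hx : IsPInt F p x) (hy : IsPInt F p y) :
    IsPInt F p (x + y) := by
  obtain ⟨a₁, d₁, hd₁, h₁⟩ := hx
  obtain ⟨a₂, d₂, hd₂, h₂⟩ := hy
  refine ⟨(d₂ : 𝓞 F) * a₁ + (d₁ : 𝓞 F) * a₂, d₁ * d₂, not_pdvd_mul hp hd₁ hd₂, ?_⟩
  push_cast [coe_int_oz]
  linear_combination (d₂:F) * h₁ + (d₁:F) * h₂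

theorem IsPInt.mul (hp : p.Prime) {x y : F} (hx : IsPInt F p x) (hy : IsPInt F p y) :
    IsPInt F p (x * y) := by
  obtain ⟨a₁, d₁, hd₁, h₁⟩ := hx
  obtain ⟨a₂, d₂, hd₂, h₂⟩ := hy
  refine ⟨a₁ * a₂, d₁ * d₂, not_pdvd_mul hp hd₁ hd₂, ?_⟩
  push_cast [coe_int_oz]
  linear_combination (d₂:F) * y * h₁ + (a₁:F) * h₂

theorem IsPInt.neg (hp : p.Prime) {x : F} (hx : IsPInt F p x) : IsPInt F p (-x) := by
  obtain ⟨a₁, d₁, hd₁, h₁⟩ := hx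
  exact ⟨-a₁, d₁, hd₁, by push_cast [coe_int_oz]; linear_combination -h₁⟩

theorem IsPInt.sum (hp : p.Prime) {ι : Type*} (s : Finset ι) (f : ι → F)
    (h : ∀ i ∈ s, IsPInt F p (f i)) : IsPInt F p (∑ i ∈ s, f i) := by
  classical
  induction s using Finset.induction_on with
  | empty => simpa using isPInt_zero hp
  | @insert a s' hx ih =>
    rw [Finset.sum_insert hx]
    exact (h a (by simp)).add hp (ih fun i hi => h i (by simp [hi]))

theorem ratIsPInt_isPInt (hp : p.Prime) {q : ℚ} (h : RatIsPInt p q) : IsPInt F p (q : F) := by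
  obtain ⟨a, d, hd, hq⟩ := h
  refine ⟨(a : 𝓞 F), d, hd, ?_⟩
  rw [coe_int_oz]
  have : ((d : ℚ) * q : ℚ) = a := hq
  calc (d:F) * q = ((d * q : ℚ) : F) := by push_cast; ring
  _ = (a:F) := by rw [hq]; push_cast; ring

theorem IsPInt.algEquiv (hp : p.Prime) (σ : F ≃ₐ[ℚ] F) {x : F} (hx : IsPInt F p x) :
    IsPInt F p (σ x) := by
  obtain ⟨a, d, hd, h⟩ := hx
  refine ⟨galRestrict ℤ ℚ F (𝓞 F) σ a, d, hd, ?_⟩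
  rw [show ((galRestrict ℤ ℚ F (𝓞 F) σ a : 𝓞 F) : F) = σ (a : F) from
    algebraMap_galRestrict_apply ℤ σ a, ← h]
  simp [map_mul]

theorem IsPInt.algebraMapKM {K : Type*} [Field K] [NumberField K] [Algebra K F]
    (hp : p.Prime) {x : K} (hx : IsPInt K p x) : IsPInt F p (algebraMap K F x) := by
  obtain ⟨a, d, hd, h⟩ := hx
  refine ⟨⟨algebraMap K F (a : K),
    (NumberField.RingOfIntegers.isIntegral_coe a).map (algebraMap K F).toIntAlgHom⟩, d, hd, ?_⟩
  have : ((d : K) * x) = (a : K) := h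
  calc (d : F) * algebraMap K F x = algebraMap K F ((d:K) * x) := by rw [map_mul, map_intCast]
  _ = _ := by rw [this]; rfl

end Aux
section Aux2
set_option linter.unusedSectionVars false
set_option linter.unusedVariables false

variable {M : Type*} [Field M] [NumberField M] {p : ℕ}

theorem memPIdeal_of_mem (hp : p.Prime) {I : Ideal (𝓞 M)} {a : 𝓞 M} (ha : a ∈ I) :
    MemPIdeal M p I (a : M) := ⟨a, 1, not_pdvd_one hp, ha, by simp⟩

theorem MemPIdeal.add (hp : p.Prime) {I : Ideal (𝓞 M)} {x y : M}
    (hx : MemPIdeal M p I x) (hy : MemPIdeal M p I y) : MemPIdeal M p I (x + y) := by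
  obtain ⟨a₁, d₁, hd₁, ha₁, h₁⟩ := hx
  obtain ⟨a₂, d₂, hd₂, ha₂, h₂⟩ := hy
  refine ⟨(d₂ : 𝓞 M) * a₁ + (d₁ : 𝓞 M) * a₂, d₁ * d₂, not_pdvd_mul hp hd₁ hd₂,
    I.add_mem (I.mul_mem_left _ ha₁) (I.mul_mem_left _ ha₂), ?_⟩
  push_cast [coe_int_oz]
  linear_combination (d₂:M) * h₁ + (d₁:M) * h₂

theorem MemPIdeal.neg (hp : p.Prime) {I : Ideal (𝓞 M)} {x : M}
    (hx : MemPIdeal M p I x) : MemPIdeal M p I (-x) := by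
  obtain ⟨a₁, d₁, hd₁, ha₁, h₁⟩ := hx
  exact ⟨-a₁, d₁, hd₁, I.neg_mem ha₁, by push_cast [coe_int_oz]; linear_combination -h₁⟩

theorem MemPIdeal.smul (hp : p.Prime) {I : Ideal (𝓞 M)} {x y : M}
    (hx : IsPInt M p x) (hy : MemPIdeal M p I y) : MemPIdeal M p I (x * y) := by
  obtain ⟨a₁, d₁, hd₁, h₁⟩ := hx
  obtain ⟨a₂, d₂, hd₂, ha₂, h₂⟩ := hy
  refine ⟨a₁ * a₂, d₁ * d₂, not_pdvd_mul hp hd₁ hd₂, I.mul_mem_left _ ha₂, ?_⟩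
  push_cast [coe_int_oz]
  linear_combination (d₂:M) * y * h₁ + (a₁:M) * h₂

theorem MemPIdeal.mul (hp : p.Prime) {I J : Ideal (𝓞 M)} {x y : M}
    (hx : MemPIdeal M p I x) (hy : MemPIdeal M p J y) : MemPIdeal M p (I * J) (x * y) := by
  obtain ⟨a₁, d₁, hd₁, ha₁, h₁⟩ := hx
  obtain ⟨a₂, d₂, hd₂, ha₂, h₂⟩ := hy
  refine ⟨a₁ * a₂, d₁ * d₂, not_pdvd_mul hp hd₁ hd₂, Ideal.mul_mem_mul ha₁ ha₂, ?_⟩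
  push_cast [coe_int_oz]
  linear_combination (d₂:M) * y * h₁ + (a₁:M) * h₂

theorem MemPIdeal.sum (hp : p.Prime) {I : Ideal (𝓞 M)} {ι : Type*} (s : Finset ι) (f : ι → M)
    (h : ∀ i ∈ s, MemPIdeal M p I (f i)) : MemPIdeal M p I (∑ i ∈ s, f i) := by
  classical
  induction s using Finset.induction_on with
  | empty => exact ⟨0, 1, not_pdvd_one hp, I.zero_mem, by simp⟩
  | @insert a s' hx ih =>
    rw [Finset.sum_insert hx]
    exact (h a (by simp)).add hp (ih fun i hi => h i (by simp [hi]))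

theorem memPIdeal_prod (hp : p.Prime) {P : Ideal (𝓞 M)} {ι : Type*} (s : Finset ι) (f : ι → M)
    (h : ∀ i ∈ s, MemPIdeal M p P (f i)) : MemPIdeal M p (P ^ s.card) (∏ i ∈ s, f i) := by
  classical
  induction s using Finset.induction_on with
  | empty => exact ⟨1, 1, not_pdvd_one hp, by simp, by simp⟩
  | @insert a s' hx ih =>
    rw [Finset.prod_insert hx, Finset.card_insert_of_notMem hx, pow_succ']
    exact (h a (by simp)).mul hp (ih fun i hi => h i (by simp [hi]))

theorem isPInt_of_memPIdeal {I : Ideal (𝓞 M)} {x : M} (hx : MemPIdeal M p I x) :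
    IsPInt M p x := by
  obtain ⟨a, d, hd, _, h⟩ := hx
  exact ⟨a, d, hd, h⟩

theorem memPIdeal_p_mul (hp : p.Prime) {P : Ideal (𝓞 M)} (hPp : (p : 𝓞 M) ∈ P) {x : M}
    (hx : IsPInt M p x) : MemPIdeal M p P ((p : M) * x) := by
  obtain ⟨a, d, hd, h⟩ := hx
  refine ⟨(p : 𝓞 M) * a, d, hd, P.mul_mem_right _ hPp, ?_⟩
  push_cast
  linear_combination (p:M) * h

-- Galois transport
variable (P : Ideal (𝓞 M)) (D : Finset (M ≃ₐ[ℚ] M))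

theorem galRestrict_coe (s : M ≃ₐ[ℚ] M) (a : 𝓞 M) :
    ((galRestrict ℤ ℚ M (𝓞 M) s a : 𝓞 M) : M) = s (a : M) :=
  algebraMap_galRestrict_apply ℤ s a

theorem stab_of_mem_D (hD : IsDecompGroup M P D) {s : M ≃ₐ[ℚ] M} (hs : s ∈ D) :
    ∀ a ∈ P, galRestrict ℤ ℚ M (𝓞 M) s a ∈ P := fun a ha =>
  (hD s).mp hs a ha _ (galRestrict_coe s a)

theorem stab_pow_of_stab {s : M ≃ₐ[ℚ] M}
    (hstab : ∀ a ∈ P, galRestrict ℤ ℚ M (𝓞 M) s a ∈ P) {k : ℕ} :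
    ∀ a ∈ P ^ k, galRestrict ℤ ℚ M (𝓞 M) s a ∈ P ^ k := by
  intro a ha
  set st := galRestrict ℤ ℚ M (𝓞 M) s
  have hmap : Ideal.map (st : 𝓞 M →+* 𝓞 M) P ≤ P := Ideal.map_le_iff_le_comap.mpr hstab
  have : st a ∈ Ideal.map (st : 𝓞 M →+* 𝓞 M) (P ^ k) :=
    Ideal.mem_map_of_mem _ ha
  rw [Ideal.map_pow] at this
  exact Ideal.pow_right_mono hmap k this

theorem stab_inv (hp : p.Prime) (hP : P.IsPrime) (hPp : (p : 𝓞 M) ∈ P) {s : M ≃ₐ[ℚ] M}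
    (hstab : ∀ a ∈ P, galRestrict ℤ ℚ M (𝓞 M) s a ∈ P) :
    ∀ a ∈ P, galRestrict ℤ ℚ M (𝓞 M) s⁻¹ a ∈ P := by
  set st := galRestrict ℤ ℚ M (𝓞 M) s with hst
  have hPbot : P ≠ ⊥ := fun h => by
    have : (p : 𝓞 M) ≠ 0 := Nat.cast_ne_zero.mpr hp.ne_zero
    exact this (by simpa [h] using hPp)
  haveI : P.IsMaximal := Ideal.IsPrime.isMaximal hP hPbot
  have hQ : P ≤ Ideal.comap (st : 𝓞 M →+* 𝓞 M) P := fun a ha => hstab a ha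
  have hQne : Ideal.comap (st : 𝓞 M →+* 𝓞 M) P ≠ ⊤ := fun h => by
    have : (1 : 𝓞 M) ∈ Ideal.comap (st : 𝓞 M →+* 𝓞 M) P := h ▸ trivial
    exact hP.ne_top (Ideal.eq_top_iff_one P |>.mpr (by simpa using this))
  have hPQ : P = Ideal.comap (st : 𝓞 M →+* 𝓞 M) P :=
    Ideal.IsMaximal.eq_of_le ‹P.IsMaximal› hQne hQ
  intro a ha
  have : galRestrict ℤ ℚ M (𝓞 M) s⁻¹ = st⁻¹ := by rw [hst, map_inv]
  rw [this]
  have h2 : st (st⁻¹ a) ∈ P := by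
    have : st (st⁻¹ a) = a := by
      change (st * st⁻¹) a = a
      rw [mul_inv_cancel]; rfl
    rw [this]; exact ha
  rw [hPQ]
  exact h2

theorem MemPIdeal.transport (hp : p.Prime) {Q : Ideal (𝓞 M)} {s : M ≃ₐ[ℚ] M}
    (hstab : ∀ a ∈ Q, galRestrict ℤ ℚ M (𝓞 M) s a ∈ Q) {x : M}
    (hx : MemPIdeal M p Q x) : MemPIdeal M p Q (s x) := by
  obtain ⟨a, d, hd, ha, h⟩ := hx
  refine ⟨galRestrict ℤ ℚ M (𝓞 M) s a, d, hd, hstab a ha, ?_⟩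
  rw [galRestrict_coe, ← h]
  simp [map_mul]

theorem IsPInt.transport (hp : p.Prime) (s : M ≃ₐ[ℚ] M) {x : M}
    (hx : IsPInt M p x) : IsPInt M p (s x) := hx.algEquiv hp s

theorem exists_inv_mod (hp : p.Prime) (hP : P.IsPrime) (hPp : (p : 𝓞 M) ∈ P) {x : M}
    (hx : IsPInt M p x) (hnx : ¬ MemPIdeal M p P x) :
    ∃ r π : M, IsPInt M p r ∧ MemPIdeal M p P π ∧ r * x = 1 + π := by
  obtain ⟨a, d, hd, h⟩ := hx
  have haP : a ∉ P := fun haP => hnx ⟨a, d, hd, haP, h⟩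
  have hPbot : P ≠ ⊥ := fun hb => by
    have : (p : 𝓞 M) ≠ 0 := Nat.cast_ne_zero.mpr hp.ne_zero
    exact this (by simpa [hb] using hPp)
  haveI hmax : P.IsMaximal := Ideal.IsPrime.isMaximal hP hPbot
  obtain ⟨b, c, hc, hbc⟩ := hmax.exists_inv haP
  have hba : b * a - 1 ∈ P := by
    have : b * a - 1 = -c := by linear_combination hbc
    rw [this]; exact P.neg_mem hc
  refine ⟨(b : M) * (d : M), ((b * a - 1 : 𝓞 M) : M), ?_, ?_, ?_⟩
  · exact (isPInt_coe hp b).mul hp (by rw [← coe_int_oz]; exact isPInt_coe hp _)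
  · exact memPIdeal_of_mem hp hba
  · push_cast
    linear_combination (b:M) * h

end Aux2
section Aux3
set_option linter.unusedSectionVars false
set_option linter.unusedVariables false

variable {M : Type*} [Field M] [NumberField M] {p : ℕ}

/-- The subring of `p`-integers of `M`. -/
def pSubring (M : Type*) [Field M] [NumberField M] (p : ℕ) (hp : p.Prime) : Subring M where
  carrier := {x | IsPInt M p x}
  mul_mem' := fun ha hb => ha.mul hp hb
  one_mem' := isPInt_one hp
  add_mem' := fun ha hb => ha.add hp hb
  zero_mem' := isPInt_zero hp
  neg_mem' := fun ha => ha.neg hp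

theorem mem_pSubring {hp : p.Prime} {x : M} : x ∈ pSubring M p hp ↔ IsPInt M p x := Iff.rfl

/-- The submonoid of `𝓞 M` of integer denominators prime to `p`. -/
def pDenoms (M : Type*) [Field M] [NumberField M] (p : ℕ) (hp : p.Prime) : Submonoid (𝓞 M) where
  carrier := {a : 𝓞 M | ∃ d : ℤ, ¬ (p:ℤ) ∣ d ∧ a = (d : 𝓞 M)}
  one_mem' := ⟨1, not_pdvd_one hp, by norm_num⟩
  mul_mem' := by
    rintro a b ⟨d₁, h₁, rfl⟩ ⟨d₂, h₂, rfl⟩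
    exact ⟨d₁ * d₂, not_pdvd_mul hp h₁ h₂, by push_cast; ring⟩

theorem pDenoms_le_nonZeroDivisors (hp : p.Prime) :
    pDenoms M p hp ≤ nonZeroDivisors (𝓞 M) := by
  rintro a ⟨d, hd, rfl⟩
  exact mem_nonZeroDivisors_of_ne_zero (Int.cast_ne_zero.mpr (pdvd_ne_zero hd))

theorem primes_disjoint_pDenoms_finite (hp : p.Prime) :
    {q : Ideal (𝓞 M) | q.IsPrime ∧ Disjoint ((pDenoms M p hp : Submonoid (𝓞 M)) : Set (𝓞 M)) (q : Set (𝓞 M))}.Finite := by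
  have hpO : ((p : 𝓞 M)) ≠ 0 := Nat.cast_ne_zero.mpr hp.ne_zero
  have hspan : (Ideal.span {(p : 𝓞 M)} : Ideal (𝓞 M)) ≠ ⊥ := by
    simpa [Ideal.span_singleton_eq_bot] using hpO
  have hfin := Ideal.finite_factors hspan
  apply Set.Finite.subset (Set.Finite.insert ⊥ (hfin.image
    (fun v => v.asIdeal)))
  rintro q ⟨hq, hdisj⟩
  rcases eq_or_ne q ⊥ with rfl | hqbot
  · exact Set.mem_insert _ _
  · right
    -- show p ∈ q
    have hpq : (p : 𝓞 M) ∈ q := by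
      obtain ⟨x, hxq, hxne⟩ : ∃ x, x ∈ q ∧ x ≠ 0 := by
        by_contra h
        push_neg at h
        exact hqbot (Submodule.eq_bot_iff _ |>.mpr h)
      have hcomap : Ideal.comap (algebraMap ℤ (𝓞 M)) q ≠ ⊥ :=
        Ideal.comap_ne_bot_of_integral_mem hxne hxq
          (NumberField.RingOfIntegers.isIntegral x)
      haveI : (Ideal.comap (algebraMap ℤ (𝓞 M)) q).IsPrime := Ideal.IsPrime.comap _
      set q₀ := Submodule.IsPrincipal.generator (Ideal.comap (algebraMap ℤ (𝓞 M)) q) with hq₀def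
      have hspan₀ : Ideal.span {q₀} = Ideal.comap (algebraMap ℤ (𝓞 M)) q :=
        Ideal.span_singleton_generator _
      have hq₀ne : q₀ ≠ 0 := by
        rintro h0
        rw [h0] at hspan₀
        exact hcomap (by rw [← hspan₀]; simp [Ideal.span_singleton_eq_bot])
      have hq₀prime : Prime q₀ := by
        rw [← Ideal.span_singleton_prime hq₀ne, hspan₀]
        infer_instance
      have hq₀mem : (q₀ : 𝓞 M) ∈ q := by
        have := Submodule.IsPrincipal.generator_mem (Ideal.comap (algebraMap ℤ (𝓞 M)) q)
        rw [← hq₀def] at this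
        simpa [Ideal.mem_comap, algebraMap_int_eq, eq_intCast] using this
      have hpdvd : (p : ℤ) ∣ q₀ := by
        by_contra hnd
        exact Set.disjoint_left.mp hdisj ⟨q₀, hnd, rfl⟩ hq₀mem
      have hassoc : Associated ((p:ℕ) : ℤ) q₀ := by
        obtain ⟨t, ht⟩ := hpdvd
        rcases hq₀prime.irreducible.isUnit_or_isUnit ht with hu | hu
        · exact absurd hu (Nat.prime_iff_prime_int.mp hp).not_unit
        · exact ⟨hu.unit, by rw [IsUnit.unit_spec, ← ht]⟩
      have hmem : ((p:ℕ) : ℤ) ∈ Ideal.comap (algebraMap ℤ (𝓞 M)) q := by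
        rw [← hspan₀, Ideal.mem_span_singleton]
        exact hassoc.symm.dvd
      simpa [Ideal.mem_comap, algebraMap_int_eq, eq_intCast] using hmem
    refine ⟨⟨q, hq, hqbot⟩, ?_, rfl⟩
    show (⟨q, hq, hqbot⟩ : IsDedekindDomain.HeightOneSpectrum (𝓞 M)).asIdeal ∣ _
    rw [Ideal.dvd_iff_le]
    simpa [Ideal.span_le] using hpq

end Aux3
section Aux4
set_option linter.unusedSectionVars false
set_option linter.unusedVariables false
set_option maxHeartbeats 1000000
set_option synthInstance.maxHeartbeats 400000

/-- Any matrix representation of a finite group over a number field `M` is conjugate to one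
with `p`-integral entries. -/
theorem exists_integral_model (M : Type*) [Field M] [NumberField M] (p : ℕ) (hp : p.Prime)
    {G : Type*} [Group G] [Fintype G] (m : ℕ) (ρ : G →* Matrix (Fin m) (Fin m) M) :
    ∃ (ρ' : G → Matrix (Fin m) (Fin m) M) (T Tinv : Matrix (Fin m) (Fin m) M),
      (∀ g i j, IsPInt M p (ρ' g i j)) ∧ (∀ g h, ρ' g * ρ' h = ρ' (g * h)) ∧
      T * Tinv = 1 ∧ Tinv * T = 1 ∧ (∀ g, ρ g = T * ρ' g * Tinv) := by
  classical
  set R := pSubring M p hp with hRdef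
  set S := pDenoms M p hp with hSdef
  -- algebra structure
  letI algOR : Algebra (𝓞 M) ↥R :=
    ((algebraMap (𝓞 M) M).codRestrict R.toSubsemiring fun a => isPInt_coe hp a).toAlgebra
  have halgOR : ∀ a : 𝓞 M, ((algebraMap (𝓞 M) ↥R a : ↥R) : M) = (a : M) := fun a => rfl
  have hcoeinj : Function.Injective (fun x : ↥R => (x : M)) := Subtype.coe_injective
  have hOinj : Function.Injective (algebraMap (𝓞 M) M) := IsFractionRing.injective _ _
  letI locSR : IsLocalization S ↥R := by
    refine ⟨fun y => ?_, fun z => ?_, fun {x y} h => ?_⟩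
    · obtain ⟨d, hd, hy⟩ := y.2
      have hdM : (d : M) ≠ 0 := Int.cast_ne_zero.mpr (pdvd_ne_zero hd)
      refine IsUnit.of_mul_eq_one ⟨(d:M)⁻¹, 1, d, hd, by field_simp; exact (show ((1 : 𝓞 M) : M) = 1 from algebraMap.coe_one).symm⟩ ?_
      apply Subtype.ext
      push_cast
      rw [halgOR, hy]
      push_cast [coe_int_oz]
      field_simp
    · obtain ⟨a, d, hd, h⟩ := z.2
      refine ⟨⟨a, ⟨(d : 𝓞 M), d, hd, rfl⟩⟩, ?_⟩
      apply Subtype.ext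
      push_cast
      rw [halgOR, halgOR, coe_int_oz, ← h]
      ring
    · refine ⟨1, ?_⟩
      have : (x : M) = (y : M) := by
        have := congrArg (fun t : ↥R => (t : M)) h
        simpa [halgOR] using this
      simp [hOinj this]
  haveI dedR : IsDedekindDomain ↥R :=
    IsLocalization.isDedekindDomain (𝓞 M) (pDenoms_le_nonZeroDivisors hp) ↥R
  haveI pidR : IsPrincipalIdealRing ↥R := by
    apply IsPrincipalIdealRing.of_finite_primes
    have horder := IsLocalization.orderIsoOfPrime S ↥R
    have hfin := primes_disjoint_pDenoms_finite (M := M) hp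
    have : Finite {q : Ideal (𝓞 M) // q.IsPrime ∧ Disjoint (S : Set (𝓞 M)) (q : Set (𝓞 M))} := by
      rw [← Set.coe_setOf]
      exact hfin
    have : Finite {I : Ideal ↥R // I.IsPrime} := Finite.of_equiv _ horder.toEquiv.symm
    rw [← Set.coe_setOf] at this
    exact Set.toFinite _
  letI fracRM : IsFractionRing ↥R M := by
    refine ⟨fun y => ?_, fun z => ?_, fun {x y} h => ?_⟩
    · have hyne : ((y : ↥R) : M) ≠ 0 := fun h0 => by
        have : (y : ↥R) ≠ 0 := nonZeroDivisors.ne_zero y.2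
        exact this (Subtype.ext (by simpa using h0))
      exact isUnit_iff_ne_zero.mpr hyne
    · obtain ⟨⟨a, s⟩, hs⟩ := IsLocalization.surj (nonZeroDivisors (𝓞 M)) z
      have hsne : (algebraMap (𝓞 M) ↥R s : ↥R) ≠ 0 := fun h0 => by
        have : (s : 𝓞 M) ≠ 0 := nonZeroDivisors.ne_zero s.2
        exact this (hOinj (by simpa [halgOR] using congrArg (fun t : ↥R => (t : M)) h0))
      exact ⟨⟨algebraMap (𝓞 M) ↥R a,
        ⟨algebraMap (𝓞 M) ↥R s, mem_nonZeroDivisors_of_ne_zero hsne⟩⟩, hs⟩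
    · exact ⟨1, by simpa using hcoeinj h⟩
  -- the stable lattice
  set gens : G × Fin m → (Fin m → M) := fun gi => (ρ gi.1).mulVec (Pi.single gi.2 1) with hgens
  set L : Submodule ↥R (Fin m → M) := Submodule.span ↥R (Set.range gens) with hLdef
  have hsingle_mem : ∀ i : Fin m, Pi.single i 1 ∈ L := fun i => by
    apply Submodule.subset_span
    refine ⟨(1, i), ?_⟩
    simp only [hgens, map_one, Matrix.one_mulVec]
  have hsmulRM : ∀ (r : ↥R) (v : Fin m → M), r • v = (r : M) • v := fun r v => rfl
  have hstabL : ∀ (g : G), ∀ w ∈ L, (ρ g).mulVec w ∈ L := by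
    intro g w hw
    induction hw using Submodule.span_induction with
    | mem x hx =>
      obtain ⟨⟨h, i⟩, rfl⟩ := hx
      apply Submodule.subset_span
      exact ⟨(g * h, i), by simp only [hgens, map_mul, ← Matrix.mulVec_mulVec]⟩
    | zero => rw [Matrix.mulVec_zero]; exact L.zero_mem
    | add x y hx hy ihx ihy => rw [Matrix.mulVec_add]; exact L.add_mem ihx ihy
    | smul r x hx ih => 
      rw [hsmulRM, Matrix.mulVec_smul, ← hsmulRM]
      exact L.smul_mem r ih
  haveI : Module.Finite ↥R ↥L := Module.Finite.span_of_finite ↥R (Set.finite_range gens)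
  haveI : NoZeroSMulDivisors ↥R ↥L := by
    refine ⟨fun {r x} h => ?_⟩
    have : (r : M) • (x : Fin m → M) = 0 := by
      have h2 := congrArg (fun t : ↥L => (t : Fin m → M)) h
      simpa [hsmulRM] using h2
    rcases smul_eq_zero.mp this with h0 | h0
    · exact Or.inl (Subtype.ext h0)
    · exact Or.inr (Subtype.ext h0)
  haveI freeL : Module.Free ↥R ↥L := Module.free_of_finite_type_torsion_free'
  set ι := Module.Free.ChooseBasisIndex ↥R ↥L
  set b : Module.Basis ι ↥R ↥L := Module.Free.chooseBasis ↥R ↥L with hbdef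
  set bv : ι → (Fin m → M) := fun i => ((b i : ↥L) : Fin m → M) with hbvdef
  have hbv_indep_R : LinearIndependent ↥R bv := by
    have := b.linearIndependent
    have h2 := this.map' L.subtype L.ker_subtype
    exact h2
  have hbv_indep : LinearIndependent M bv := (LinearIndependent.iff_fractionRing ↥R M).mp hbv_indep_R
  -- every element of L is an M-combination of bv
  have hLcomb : ∀ w ∈ L, ∃ c : ι → ↥R, w = ∑ k, (c k : M) • bv k := by
    intro w hw
    have h0 := congrArg L.subtype (b.sum_repr ⟨w, hw⟩)
    rw [map_sum] at h0
    refine ⟨fun k => b.repr ⟨w, hw⟩ k, ?_⟩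
    have h2 : ∀ k, L.subtype (b.repr ⟨w, hw⟩ k • b k)
        = ((b.repr ⟨w, hw⟩ k : ↥R) : M) • bv k := fun k => by
      rw [map_smul]; rfl
    calc w = ∑ k, L.subtype (b.repr ⟨w, hw⟩ k • b k) := h0.symm
    _ = ∑ k, ((b.repr ⟨w, hw⟩ k : ↥R) : M) • bv k := Finset.sum_congr rfl fun k _ => h2 k
  have hspan_top : Submodule.span M (Set.range bv) = ⊤ := by
    rw [eq_top_iff]
    intro v _
    have hmem : ∀ w ∈ L, w ∈ Submodule.span M (Set.range bv) := by
      intro w hw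
      obtain ⟨c, rfl⟩ := hLcomb w hw
      exact Submodule.sum_mem _ fun k _ =>
        Submodule.smul_mem _ _ (Submodule.subset_span ⟨k, rfl⟩)
    have hv : v = ∑ i, v i • (Pi.single i 1 : Fin m → M) := by
      have h3 : ∑ i, v i • (Pi.single i 1 : Fin m → M) = v :=
        calc ∑ i, v i • (Pi.single i 1 : Fin m → M) = ∑ i, Pi.single i (v i) :=
              Finset.sum_congr rfl fun i _ => by rw [← Pi.single_smul, smul_eq_mul, mul_one]
        _ = v := Finset.univ_sum_single v
      exact h3.symm
    rw [hv]
    exact Submodule.sum_mem _ fun i _ => Submodule.smul_mem _ _ (hmem _ (hsingle_mem i))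
  set B : Module.Basis ι M (Fin m → M) := Module.Basis.mk hbv_indep (by rw [hspan_top]) with hBdef
  have hcard : Fintype.card ι = m := by
    have h1 := Module.finrank_eq_card_basis B
    have h2 : Module.finrank M (Fin m → M) = m := Module.finrank_fin_fun M
    rw [h2] at h1
    exact h1.symm
  set e : ι ≃ Fin m := Fintype.equivFinOfCardEq hcard with hedef
  set b' : Module.Basis (Fin m) M (Fin m → M) := B.reindex e with hb'def
  have hb'eq : ∀ k, b' (e k) = bv k := fun k => by
    rw [hb'def, Module.Basis.reindex_apply, Equiv.symm_apply_apply, hBdef, Module.Basis.mk_apply]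
  have hb'mem : ∀ j, b' j ∈ L := fun j => by
    rw [hb'def, Module.Basis.reindex_apply, hBdef, Module.Basis.mk_apply]
    exact (b (e.symm j)).2
  have hrepr : ∀ w, w ∈ L → ∀ i : Fin m, IsPInt M p (b'.repr w i) := by
    intro w hw i
    obtain ⟨c, rfl⟩ := hLcomb w hw
    have hc : b'.repr (∑ k, (c k : M) • bv k) i = ∑ k, (c k : M) * ((b'.repr (bv k)) i) := by
      rw [map_sum, Finsupp.finset_sum_apply]
      refine Finset.sum_congr rfl fun k _ => ?_
      rw [map_smul, Finsupp.smul_apply, smul_eq_mul]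
    rw [hc]
    have hval : ∀ k, (b'.repr (bv k)) i = if e k = i then 1 else 0 := fun k => by
      rw [← hb'eq k, Module.Basis.repr_self, Finsupp.single_apply]
    have : ∑ k, (c k : M) * ((b'.repr (bv k)) i) = (c (e.symm i) : M) := by
      rw [Finset.sum_eq_single (e.symm i)]
      · rw [hval, Equiv.apply_symm_apply, if_pos rfl, mul_one]
      · intro k _ hk
        rw [hval, if_neg, mul_zero]
        exact fun h => hk (by rw [← h, Equiv.symm_apply_apply])
      · intro h
        exact absurd (Finset.mem_univ _) h
    rw [this]
    exact (c (e.symm i)).2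
  set bf : Module.Basis (Fin m) M (Fin m → M) := Pi.basisFun M (Fin m) with hbfdef
  set ρ' : G → Matrix (Fin m) (Fin m) M :=
    fun g => LinearMap.toMatrix b' b' (Matrix.mulVecLin (ρ g)) with hρ'def
  set U := LinearMap.toMatrix bf b' (LinearMap.id (R := M) (M := Fin m → M)) with hUdef
  set W := LinearMap.toMatrix b' bf (LinearMap.id (R := M) (M := Fin m → M)) with hWdef
  have hUW : U * W = 1 := by
    rw [hUdef, hWdef, ← LinearMap.toMatrix_comp b' bf b', LinearMap.id_comp,
      LinearMap.toMatrix_id]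
  have hWU : W * U = 1 := by
    rw [hUdef, hWdef, ← LinearMap.toMatrix_comp bf b' bf, LinearMap.id_comp,
      LinearMap.toMatrix_id]
  have hρ'entries : ∀ g i j, IsPInt M p (ρ' g i j) := by
    intro g i j
    simp only [hρ'def, LinearMap.toMatrix_apply, Matrix.mulVecLin_apply]
    exact hrepr _ (hstabL g _ (hb'mem j)) i
  have hρ'mul : ∀ g h, ρ' g * ρ' h = ρ' (g * h) := by
    intro g h
    have hgh : ρ (g * h) = ρ g * ρ h := map_mul ρ g h
    simp only [hρ'def, hgh, Matrix.mulVecLin_mul, LinearMap.toMatrix_comp b' b' b']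
  have hconj : ∀ g, ρ g = W * ρ' g * U := by
    intro g
    have h1 : ρ g = LinearMap.toMatrix bf bf (Matrix.mulVecLin (ρ g)) := by
      rw [hbfdef, LinearMap.toMatrix_eq_toMatrix', ← Matrix.toLin'_apply',
        LinearMap.toMatrix'_toLin']
    have h2 : LinearMap.toMatrix bf bf (Matrix.mulVecLin (ρ g)) =
        LinearMap.toMatrix b' bf (Matrix.mulVecLin (ρ g)) * U := by
      rw [hUdef, ← LinearMap.toMatrix_comp bf b' bf, LinearMap.comp_id]
    have h3 : LinearMap.toMatrix b' bf (Matrix.mulVecLin (ρ g)) = W * ρ' g := by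
      rw [hWdef, hρ'def, ← LinearMap.toMatrix_comp b' b' bf, LinearMap.id_comp]
    rw [h1, h2, h3]
  exact ⟨ρ', W, U, hρ'entries, hρ'mul, hWU, hUW, hconj⟩

end Aux4
section Aux5
set_option linter.unusedSectionVars false
set_option linter.unusedVariables false

variable {M : Type*} [Field M] [NumberField M] {p : ℕ} {m : ℕ}

theorem mapAE_mul (s : M ≃ₐ[ℚ] M) (X Y : Matrix (Fin m) (Fin m) M) :
    (X * Y).map ⇑s = X.map ⇑s * Y.map ⇑s := by
  ext i j
  simp [Matrix.mul_apply, map_sum]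

theorem mapAE_one (s : M ≃ₐ[ℚ] M) :
    (1 : Matrix (Fin m) (Fin m) M).map ⇑s = 1 := by
  ext i j
  simp [Matrix.one_apply, apply_ite]

theorem mapAE_smul (s : M ≃ₐ[ℚ] M) (c : M) (X : Matrix (Fin m) (Fin m) M) :
    (c • X).map ⇑s = s c • X.map ⇑s := by
  ext i j
  simp

theorem traceAE (s : M ≃ₐ[ℚ] M) (X : Matrix (Fin m) (Fin m) M) :
    (X.map ⇑s).trace = s X.trace := by
  simp [Matrix.trace, map_sum, Matrix.diag]

theorem trace_conj {T Tinv X : Matrix (Fin m) (Fin m) M} (h2 : Tinv * T = 1) :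
    (T * X * Tinv).trace = X.trace := by
  rw [Matrix.trace_mul_cycle, h2, one_mul]

theorem det_sum_conj {ι : Type*} [Fintype ι] (s : M ≃ₐ[ℚ] M)
    {T Tinv : Matrix (Fin m) (Fin m) M} (h2 : Tinv * T = 1)
    (c : ι → M) (X : ι → Matrix (Fin m) (Fin m) M) :
    (∑ ν, c ν • (T * X ν * Tinv).map ⇑s).det = (∑ ν, c ν • (X ν).map ⇑s).det := by
  have hterm : ∀ ν, c ν • (T * X ν * Tinv).map ⇑s
      = T.map ⇑s * (c ν • (X ν).map ⇑s) * Tinv.map ⇑s := by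
    intro ν
    rw [mapAE_mul, mapAE_mul, Matrix.mul_smul, Matrix.smul_mul]
  have hsum : ∑ ν, c ν • (T * X ν * Tinv).map ⇑s
      = T.map ⇑s * (∑ ν, c ν • (X ν).map ⇑s) * Tinv.map ⇑s := by
    rw [Finset.sum_congr rfl fun ν _ => hterm ν, ← Finset.sum_mul, ← Finset.mul_sum]
  rw [hsum, Matrix.det_mul, Matrix.det_mul, mul_comm, ← mul_assoc, ← Matrix.det_mul,
    ← mapAE_mul, h2, mapAE_one, Matrix.det_one, one_mul]

theorem IsPInt.prod (hp : p.Prime) {ι : Type*} (s : Finset ι) (f : ι → M)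
    (h : ∀ i ∈ s, IsPInt M p (f i)) : IsPInt M p (∏ i ∈ s, f i) := by
  classical
  induction s using Finset.induction_on with
  | empty => simpa using isPInt_one hp
  | @insert a s' hx ih =>
    rw [Finset.prod_insert hx]
    exact (h a (by simp)).mul hp (ih fun i hi => h i (by simp [hi]))

theorem isPInt_intCast (hp : p.Prime) (n : ℤ) : IsPInt M p ((n : ℤ) : M) := by
  rw [← coe_int_oz]
  exact isPInt_coe hp _

theorem IsPInt.zsmul (hp : p.Prime) {x : M} (hx : IsPInt M p x) (n : ℤ) :
    IsPInt M p (n • x) := by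
  rw [zsmul_eq_mul]
  exact (isPInt_intCast hp n).mul hp hx

theorem isPInt_det (hp : p.Prime) {X : Matrix (Fin m) (Fin m) M}
    (h : ∀ i j, IsPInt M p (X i j)) : IsPInt M p X.det := by
  rw [Matrix.det_apply]
  exact IsPInt.sum hp _ _ fun σ _ =>
    (IsPInt.prod hp _ _ fun i _ => h _ _).zsmul hp _

theorem isPInt_adjugate (hp : p.Prime) {X : Matrix (Fin m) (Fin m) M}
    (h : ∀ i j, IsPInt M p (X i j)) : ∀ i j, IsPInt M p (X.adjugate i j) := by
  intro i j
  rw [Matrix.adjugate_apply]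
  apply isPInt_det hp
  intro i' j'
  rw [Matrix.updateRow_apply]
  split
  · rw [Pi.single_apply]
    split
    · exact isPInt_one hp
    · exact isPInt_zero hp
  · exact h _ _

end Aux5
set_option maxHeartbeats 2000000 in
set_option synthInstance.maxHeartbeats 400000 in
/-- Corollary 3.6. Let `U = ∑_ν u(ν)·ν⁻¹`, `u(ν) ∈ ℤ_(p)`, satisfy
`∑_ν u(ν)·α_p(η)^{ν⁻¹} ≡ 0 (mod p·Z_{K,(p)})`, let `𝔭 ∣ p` be the prime associated with the
irreducible `p`-adic character `θ` (with decomposition group `D`, `f := |D|`), and suppose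
`U_φ = e_φ·U ≢ 0 (mod 𝔭)`. Then `Δ_p^θ(η) ≡ 0 (mod 𝔭^f)`, i.e. the local `θ`-regulator is
divisible by `p^f`. -/
theorem statement9 (K M : Type*) [Field K] [NumberField K] [IsGalois ℚ K]
    [Field M] [NumberField M] [IsGalois ℚ M] [Algebra K M]
    (m : ℕ) (ρ : (K ≃ₐ[ℚ] K) →* Matrix (Fin m) (Fin m) M)
    (hirr : AbsIrred K M m ρ)
    (p : ℕ) (hp : p.Prime) (hp2 : 2 < p) (hpn : ¬ p ∣ Fintype.card (K ≃ₐ[ℚ] K))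
    (hurK : UnramifiedIn K p) (hurM : UnramifiedIn M p)
    (η : K) (hη : η ≠ 0) (hpr : PrimeToP K p η) (np : ℕ) (hnp : ResidueDeg K p np)
    (α : 𝓞 K) (hα : IsPInt K p (((α : K) - alphaP K p np η) / p))
    (u : (K ≃ₐ[ℚ] K) → ℚ) (hu : ∀ ν, RatIsPInt p (u ν))
    (hrel : IsPInt K p ((∑ ν : K ≃ₐ[ℚ] K, (u ν : K) * ν⁻¹ (alphaP K p np η)) / p))
    (P : Ideal (𝓞 M)) (hP : P.IsPrime) (hPp : (p : 𝓞 M) ∈ P)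
    (D : Finset (M ≃ₐ[ℚ] M)) (hD : IsDecompGroup M P D)
    (hUφ : ¬ ∀ ν, MemPIdeal M p P (eCompQ K M m ρ u ν)) :
    MemPIdeal M p (P ^ D.card) (DeltaTheta K M m ρ D (α : K)) := by
  classical
  obtain ⟨ρ', T, Tinv, hent, hmul, hTT, hTinvT, hconj⟩ := exists_integral_model M p hp m ρ
  set γ := alphaP K p np η with hγ
  set β := ∑ τ : K ≃ₐ[ℚ] K, (u τ : K) * τ⁻¹ ((α : K)) with hβdef
  have hβ : IsPInt K p (β / p) := by
    have h1 : β / p = (∑ τ : K ≃ₐ[ℚ] K, (u τ : K) * (τ⁻¹ (((α : K) - γ) / p)))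
        + (∑ τ : K ≃ₐ[ℚ] K, (u τ : K) * τ⁻¹ γ) / p := by
      rw [hβdef, Finset.sum_div, Finset.sum_div, ← Finset.sum_add_distrib]
      refine Finset.sum_congr rfl fun τ _ => ?_
      have hpK : ((p : ℕ) : K) ≠ 0 := Nat.cast_ne_zero.mpr hp.ne_zero
      rw [map_div₀, map_sub, map_natCast]
      field_simp
      ring
    rw [h1]
    exact (IsPInt.sum hp _ _ fun τ _ =>
      (ratIsPInt_isPInt hp (hu τ)).mul hp (hα.algEquiv hp τ⁻¹)).add hp hrel
  set c : (K ≃ₐ[ℚ] K) → M := fun ν => algebraMap K M (ν (α : K)) with hcdef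
  have hcInt : ∀ ν, IsPInt M p (c ν) :=
    fun ν => ((isPInt_coe hp α).algEquiv hp ν).algebraMapKM hp
  have hcβ : ∀ σ : K ≃ₐ[ℚ] K, MemPIdeal M p P (algebraMap K M (σ β)) := by
    intro σ
    have h1 : IsPInt K p (σ β / p) := by
      have h2 : σ β / p = σ (β / p) := by rw [map_div₀, map_natCast]
      rw [h2]; exact hβ.algEquiv hp σ
    have h3 : algebraMap K M (σ β) = (p : M) * algebraMap K M (σ β / p) := by
      rw [← map_natCast (algebraMap K M) p, ← map_mul]
      congr 1
      have hpK : ((p : ℕ) : K) ≠ 0 := Nat.cast_ne_zero.mpr hp.ne_zero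
      field_simp
    rw [h3]
    exact memPIdeal_p_mul hp hPp (h1.algebraMapKM hp)
  -- main per-s claim
  have key : ∀ s ∈ D, MemPIdeal M p P
      (Matrix.det (∑ ν : K ≃ₐ[ℚ] K, c ν • (ρ' ν⁻¹).map ⇑s)) := by
    intro s hs
    have hstab_s := stab_of_mem_D P D hD hs
    set Xs : (K ≃ₐ[ℚ] K) → Matrix (Fin m) (Fin m) M := fun g => (ρ' g⁻¹).map ⇑s with hXs
    have hXsmul : ∀ g h : K ≃ₐ[ℚ] K, Xs g * Xs h = Xs (h * g) := fun g h => by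
      simp only [hXs]
      rw [← mapAE_mul, hmul, mul_inv_rev]
    have hXent : ∀ (g : K ≃ₐ[ℚ] K) i j, IsPInt M p (Xs g i j) := fun g i j => by
      simp only [hXs, Matrix.map_apply]
      exact (hent g⁻¹ i j).algEquiv hp s
    set A := ∑ ν : K ≃ₐ[ℚ] K, c ν • Xs ν with hA
    set Bm := ∑ τ : K ≃ₐ[ℚ] K, (u τ : M) • Xs τ with hBm
    have hAent : ∀ i j, IsPInt M p (A i j) := by
      intro i j
      rw [hA, Matrix.sum_apply]
      refine IsPInt.sum hp _ _ fun ν _ => ?_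
      rw [Matrix.smul_apply, smul_eq_mul]
      exact (hcInt ν).mul hp (hXent ν i j)
    have hBent : ∀ i j, IsPInt M p (Bm i j) := by
      intro i j
      rw [hBm, Matrix.sum_apply]
      refine IsPInt.sum hp _ _ fun τ _ => ?_
      rw [Matrix.smul_apply, smul_eq_mul]
      exact (ratIsPInt_isPInt hp (hu τ)).mul hp (hXent τ i j)
    have hBA : Bm * A = ∑ σ : K ≃ₐ[ℚ] K, (algebraMap K M (σ β)) • Xs σ := by
      rw [hBm, hA, Finset.sum_mul_sum]
      have hterm : ∀ τ ν : K ≃ₐ[ℚ] K,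
          ((u τ : M) • Xs τ) * (c ν • Xs ν) = ((u τ : M) * c ν) • Xs (ν * τ) := by
        intro τ ν
        rw [Matrix.smul_mul, Matrix.mul_smul, hXsmul, smul_smul]
      calc ∑ τ : K ≃ₐ[ℚ] K, ∑ ν : K ≃ₐ[ℚ] K, ((u τ : M) • Xs τ) * (c ν • Xs ν)
          = ∑ τ : K ≃ₐ[ℚ] K, ∑ σ : K ≃ₐ[ℚ] K, ((u τ : M) * c (σ * τ⁻¹)) • Xs σ := by
            refine Finset.sum_congr rfl fun τ _ => ?_
            rw [Finset.sum_congr rfl fun ν _ => hterm τ ν]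
            refine Fintype.sum_equiv (Equiv.mulRight τ) _ _ fun ν => ?_
            simp only [Equiv.coe_mulRight, mul_inv_cancel_right]
      _ = ∑ σ : K ≃ₐ[ℚ] K, ∑ τ : K ≃ₐ[ℚ] K, ((u τ : M) * c (σ * τ⁻¹)) • Xs σ :=
            Finset.sum_comm
      _ = ∑ σ : K ≃ₐ[ℚ] K, (∑ τ : K ≃ₐ[ℚ] K, (u τ : M) * c (σ * τ⁻¹)) • Xs σ := by
            refine Finset.sum_congr rfl fun σ _ => ?_
            rw [Finset.sum_smul]
      _ = ∑ σ : K ≃ₐ[ℚ] K, (algebraMap K M (σ β)) • Xs σ := by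
            refine Finset.sum_congr rfl fun σ _ => ?_
            congr 1
            rw [hβdef, map_sum, map_sum]
            refine Finset.sum_congr rfl fun τ _ => ?_
            simp only [hcdef, map_mul, map_ratCast, AlgEquiv.mul_apply]
    by_contra hnd
    have hAdet : IsPInt M p A.det := isPInt_det hp hAent
    obtain ⟨r, π, hr, hπ, hrx⟩ := exists_inv_mod P hp hP hPp hAdet hnd
    have hCent : ∀ i j, MemPIdeal M p P ((Bm * A) i j) := by
      intro i j
      rw [hBA, Matrix.sum_apply]
      refine MemPIdeal.sum hp _ _ fun σ _ => ?_
      rw [Matrix.smul_apply, smul_eq_mul, mul_comm]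
      exact MemPIdeal.smul hp (hXent σ i j) (hcβ σ)
    have hkey : Bm = r • (Bm * A * A.adjugate) - π • Bm := by
      have h1 : Bm * A * A.adjugate = A.det • Bm := by
        rw [mul_assoc, Matrix.mul_adjugate, Matrix.mul_smul, mul_one]
      rw [h1, smul_smul, hrx, add_smul, one_smul]
      abel
    have hBmem : ∀ i j, MemPIdeal M p P (Bm i j) := by
      intro i j
      have h2 : Bm i j = r * ((Bm * A * A.adjugate) i j) - π * (Bm i j) := by
        have h3 := congrFun (congrFun hkey i) j
        simpa [Matrix.sub_apply, Matrix.smul_apply, smul_eq_mul] using h3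
      rw [h2, sub_eq_add_neg]
      have h4 : MemPIdeal M p P ((Bm * A * A.adjugate) i j) := by
        rw [Matrix.mul_apply]
        refine MemPIdeal.sum hp _ _ fun k _ => ?_
        rw [mul_comm]
        exact MemPIdeal.smul hp (isPInt_adjugate hp hAent k j) (hCent i k)
      refine (MemPIdeal.smul hp hr h4).add hp ?_
      have h5 := MemPIdeal.smul hp (hBent i j) hπ
      rw [mul_comm] at h5
      exact h5.neg hp
    have hecomp : ∀ ν, MemPIdeal M p P (eCompQ K M m ρ u ν) := by
      intro ν
      have htr : ∀ τ : K ≃ₐ[ℚ] K, Matrix.trace (ρ τ⁻¹) = Matrix.trace (ρ' τ⁻¹) := fun τ => by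
        rw [hconj τ⁻¹, trace_conj hTinvT]
      set Sν := ∑ τ : K ≃ₐ[ℚ] K, Matrix.trace (ρ' τ⁻¹) * (u (ν * τ) : M) with hSν
      have hstep : s Sν = Matrix.trace (Bm * (ρ' ν).map ⇑s) := by
        have h1 : Bm * (ρ' ν).map ⇑s
            = ∑ τ : K ≃ₐ[ℚ] K, (u τ : M) • ((ρ' (τ⁻¹ * ν)).map ⇑s) := by
          rw [hBm, Finset.sum_mul]
          refine Finset.sum_congr rfl fun τ _ => ?_
          simp only [hXs]
          rw [Matrix.smul_mul, ← mapAE_mul, hmul]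
        rw [h1, Matrix.trace_sum]
        have h2 : ∀ τ : K ≃ₐ[ℚ] K, Matrix.trace ((u τ : M) • ((ρ' (τ⁻¹ * ν)).map ⇑s))
            = (u τ : M) * s (Matrix.trace (ρ' (τ⁻¹ * ν))) := fun τ => by
          rw [Matrix.trace_smul, traceAE, smul_eq_mul]
        rw [Finset.sum_congr rfl fun τ _ => h2 τ, hSν, map_sum]
        calc ∑ τ : K ≃ₐ[ℚ] K, s (Matrix.trace (ρ' τ⁻¹) * (u (ν * τ) : M))
            = ∑ τ : K ≃ₐ[ℚ] K, (u (ν * τ) : M) * s (Matrix.trace (ρ' τ⁻¹)) := by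
              refine Finset.sum_congr rfl fun τ _ => ?_
              rw [map_mul, map_ratCast, mul_comm]
        _ = ∑ τ : K ≃ₐ[ℚ] K, (u τ : M) * s (Matrix.trace (ρ' (τ⁻¹ * ν))) := by
              refine Fintype.sum_equiv (Equiv.mulLeft ν) _ _ fun σ => ?_
              simp only [Equiv.coe_mulLeft, mul_inv_rev, inv_mul_cancel_right]
      have htrmem : MemPIdeal M p P (Matrix.trace (Bm * (ρ' ν).map ⇑s)) := by
        rw [Matrix.trace]
        refine MemPIdeal.sum hp _ _ fun i _ => ?_
        rw [Matrix.diag_apply, Matrix.mul_apply]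
        refine MemPIdeal.sum hp _ _ fun k _ => ?_
        rw [mul_comm]
        refine MemPIdeal.smul hp ?_ (hBmem i k)
        exact (hent ν k i).algEquiv hp s
      have hSmem : MemPIdeal M p P Sν := by
        have hs1 : s⁻¹ (s Sν) = Sν := by
          have h7 : (s⁻¹ * s) Sν = Sν := by rw [inv_mul_cancel]; rfl
          rwa [AlgEquiv.mul_apply] at h7
        rw [← hs1]
        exact MemPIdeal.transport hp (stab_inv P hp hP hPp hstab_s) (hstep ▸ htrmem)
      have hecq : eCompQ K M m ρ u ν
          = ((m : M) / ((Fintype.card (K ≃ₐ[ℚ] K)) : M)) * Sν := by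
        have h6 : eCompQ K M m ρ u ν = ((m : M) / ((Fintype.card (K ≃ₐ[ℚ] K)) : M)) *
            ∑ τ : K ≃ₐ[ℚ] K, Matrix.trace (ρ τ⁻¹) * (u (ν * τ) : M) := rfl
        rw [h6, hSν]
        congr 1
        exact Finset.sum_congr rfl fun τ _ => by rw [htr τ]
      have hcoef : IsPInt M p ((m : M) / ((Fintype.card (K ≃ₐ[ℚ] K)) : M)) := by
        refine ⟨(m : 𝓞 M), (Fintype.card (K ≃ₐ[ℚ] K) : ℤ), ?_, ?_⟩
        · intro h
          exact hpn (Int.natCast_dvd_natCast.mp h)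
        · have hn0 : ((Fintype.card (K ≃ₐ[ℚ] K)) : M) ≠ 0 :=
            Nat.cast_ne_zero.mpr Fintype.card_ne_zero
          push_cast [coe_nat_oz]
          field_simp
      rw [hecq]
      exact MemPIdeal.smul hp hcoef hSmem
    exact hUφ hecomp
  -- conclude
  have hfactor : ∀ s ∈ D,
      (∑ ν : K ≃ₐ[ℚ] K, algebraMap K M (ν (α : K)) • (ρ ν⁻¹).map ⇑s).det
      = (∑ ν : K ≃ₐ[ℚ] K, c ν • (ρ' ν⁻¹).map ⇑s).det := by
    intro s hs
    calc (∑ ν : K ≃ₐ[ℚ] K, algebraMap K M (ν (α : K)) • (ρ ν⁻¹).map ⇑s).det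
        = (∑ ν : K ≃ₐ[ℚ] K, c ν • (T * ρ' ν⁻¹ * Tinv).map ⇑s).det := by
          refine congrArg _ (Finset.sum_congr rfl fun ν _ => ?_)
          rw [hconj ν⁻¹, hcdef]
    _ = _ := det_sum_conj s hTinvT c (fun ν => ρ' ν⁻¹)
  have hDT : DeltaTheta K M m ρ D (α : K)
      = ∏ s ∈ D, (∑ ν : K ≃ₐ[ℚ] K, c ν • (ρ' ν⁻¹).map ⇑s).det :=
    Finset.prod_congr rfl hfactor
  rw [hDT]
  exact memPIdeal_prod hp D _ key
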